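/- arXiv:1605.05822 — 5 statements merged into one kernel-verified Lean document; each statement's English description precedes it below -/
import Mathlib

section
/- In the basic game, a Nash equilibrium always exists: there is a subset I* of {1,...,N} such that U_i(I*) ≥ 0 for every i ∈ I* and U_j(I* ∪ {j}) ≤ 0 for every j ∉ I*. -/
open Finset

/-- Expected payoff of scientist `i` in the basic game when the participating set is `I`:
`U_i(I) = V·h_i/h_I − h_i·x·d/h_I − F`. -/
noncomputable def payoff {N : ℕ} (h : Fin N → ℝ) (V d x F : ℝ)
    (I : Finset (Fin N)) (i : Fin N) : ℝ :=
  V * h i / (∑ j ∈ I, h j) - h i * x * d / (∑ j ∈ I, h j) - F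

/-- `I` is a Nash equilibrium of the basic game. -/
def IsEquil {N : ℕ} (h : Fin N → ℝ) (V d x F : ℝ) (I : Finset (Fin N)) : Prop :=
  (∀ i ∈ I, 0 ≤ payoff h V d x F I i) ∧
  (∀ j ∉ I, payoff h V d x F (insert j I) j ≤ 0)

/-- In the basic game, a Nash equilibrium always exists. -/
theorem nash_equilibrium_exists (N : ℕ) (h : Fin N → ℝ)
    (hpos : ∀ i, 0 < h i) (hdesc : ∀ i j : Fin N, i ≤ j → h j ≤ h i)
    (V d x F : ℝ) (hV : 0 < V) (hd : 0 < d) (hx : 0 < x) (hF : 0 < F) :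
    ∃ Istar : Finset (Fin N), IsEquil h V d x F Istar := by
  classical
  set C : ℝ := V - x * d with hC
  -- the candidate sets
  set Ik : ℕ → Finset (Fin N) := fun k => univ.filter (fun i => i.val < k) with hIk
  set H : ℕ → ℝ := fun k => ∑ j ∈ Ik k, h j with hH
  have hmemIk : ∀ k (i : Fin N), i ∈ Ik k ↔ i.val < k := by
    intro k i; simp [hIk]
  have hHnonneg : ∀ k, 0 ≤ H k :=
    fun k => Finset.sum_nonneg fun j _ => (hpos j).le
  -- the "all members content" predicate
  set P : ℕ → Prop := fun k => ∀ i ∈ Ik k, F * H k ≤ C * h i with hP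
  have hP0 : P 0 := by
    intro i hi
    rw [hmemIk] at hi
    omega
  set k : ℕ := Nat.findGreatest P N with hk
  have hkN : k ≤ N := Nat.findGreatest_le N
  have hPk : P k := Nat.findGreatest_spec (Nat.zero_le N) hP0
  refine ⟨Ik k, ?_, ?_⟩
  · -- members are content
    intro i hi
    have hi' : i.val < k := (hmemIk k i).1 hi
    have hHpos : 0 < H k :=
      Finset.sum_pos (fun j _ => hpos j) ⟨i, hi⟩
    have hkey : F * H k ≤ C * h i := hPk i hi
    have : payoff h V d x F (Ik k) i = C * h i / H k - F := by
      unfold payoff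
      rw [hC, hH]
      ring
    rw [this, sub_nonneg, le_div_iff₀ hHpos]
    linarith
  · -- entrants do not want to join
    intro j hj
    have hj' : k ≤ j.val := by
      by_contra hlt
      exact hj ((hmemIk k j).2 (by omega))
    have hjIk : j ∉ Ik k := hj
    have hsum : ∑ l ∈ insert j (Ik k), h l = h j + H k := by
      rw [Finset.sum_insert hjIk]
    have hspos : 0 < h j + H k := by
      have := hpos j; have := hHnonneg k; linarith
    have hpay : payoff h V d x F (insert j (Ik k)) j = C * h j / (h j + H k) - F := by
      unfold payoff
      rw [hsum, hC]
      ring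
    rw [hpay, sub_nonpos, div_le_iff₀ hspos]
    -- it suffices to show (C - F) * h j ≤ F * H k
    have key : (C - F) * h j ≤ F * H k := by
      -- since j ∉ Ik k, we have k < N
      have hkltN : k < N := lt_of_le_of_lt hj' j.isLt
      have hnP : ¬ P (k + 1) :=
        Nat.findGreatest_is_greatest (Nat.lt_succ_self k) hkltN
      obtain ⟨i, hiMem, hiBad⟩ : ∃ i ∈ Ik (k + 1), ¬ F * H (k + 1) ≤ C * h i := by
        by_contra hcon
        push_neg at hcon
        exact hnP hcon
      push_neg at hiBad
      have hiVal : i.val ≤ k := by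
        have := (hmemIk (k + 1) i).1 hiMem
        omega
      set m : Fin N := ⟨k, hkltN⟩ with hm
      have hmnot : m ∉ Ik k := by
        rw [hmemIk]; exact Nat.lt_irrefl k
      have hIksucc : Ik (k + 1) = insert m (Ik k) := by
        ext l
        simp only [hmemIk, Finset.mem_insert]
        constructor
        · intro hl
          rcases Nat.lt_succ_iff_lt_or_eq.1 hl with hl | hl
          · exact Or.inr hl
          · exact Or.inl (Fin.ext hl)
        · rintro (rfl | hl)
          · exact Nat.lt_succ_self k
          · omega
      have hHsucc : H (k + 1) = h m + H k := by
        rw [hH]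
        simp only
        rw [hIksucc, Finset.sum_insert hmnot]
      have hmi : h m ≤ h i := hdesc i m (Fin.le_def.mpr hiVal)
      -- C * h i < F * H k + F * h m ≤ F * H k + F * h i
      have h1 : (C - F) * h i < F * H k := by
        rw [hHsucc] at hiBad
        nlinarith [hF.le]
      have hji : h j ≤ h i := hdesc i j (Fin.le_def.mpr (by omega))
      rcases le_or_gt (C - F) 0 with hCF | hCF
      · have : (C - F) * h j ≤ 0 := mul_nonpos_of_nonpos_of_nonneg hCF (hpos j).le
        linarith [mul_nonneg hF.le (hHnonneg k)]
      · have : (C - F) * h j ≤ (C - F) * h i :=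
          mul_le_mul_of_nonneg_left hji hCF.le
        linarith
    nlinarith [hpos j]
end

section
/- In the basic game with V − d·x − F > 0, the set I* = {1,...,i*}, where i* = max{ i : V·h_i/(Σ_{j=1}^i h_j) − h_i·x·d/(Σ_{j=1}^i h_j) − F ≥ 0 }, is a Nash equilibrium; moreover every scientist i < i* has strictly positive expected payoff in I*, and every scientist i > i* would have strictly negative expected payoff upon joining I*. -/
open Finset

/-- with `V − d·x − F > 0`, the top-capital set `I* = {1,…,i*}`,
where `i*` is the largest `i` with `U_i({1,…,i}) ≥ 0`, is a Nash equilibrium; every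
scientist `i < i*` has strictly positive payoff in `I*`, and every scientist `i > i*`
would get a strictly negative payoff upon joining `I*`. -/
theorem top_set_is_equilibrium (N : ℕ) (h : Fin N → ℝ)
    (hpos : ∀ i, 0 < h i) (hdesc : ∀ i j : Fin N, i < j → h j < h i)
    (V d x F : ℝ) (hV : 0 < V) (hd : 0 < d) (hx : 0 < x) (hF : 0 < F)
    (hgain : 0 < V - d * x - F)
    (kstar : Fin N)
    (hkmem : 0 ≤ payoff h V d x F (Finset.Iic kstar) kstar)
    (hkmax : ∀ k : Fin N, 0 ≤ payoff h V d x F (Finset.Iic k) k → k ≤ kstar) :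
    IsEquil h V d x F (Finset.Iic kstar) ∧
    (∀ i : Fin N, i < kstar → 0 < payoff h V d x F (Finset.Iic kstar) i) ∧
    (∀ i : Fin N, kstar < i → payoff h V d x F (insert i (Finset.Iic kstar)) i < 0) := by
  have hc : 0 < V - x * d := by nlinarith
  set S : ℝ := ∑ j ∈ Finset.Iic kstar, h j with hS
  have hSpos : 0 < S := Finset.sum_pos (fun i _ => hpos i)
    ⟨kstar, Finset.mem_Iic.2 le_rfl⟩
  have hpay : ∀ i : Fin N, payoff h V d x F (Finset.Iic kstar) i
      = h i * (V - x * d) / S - F := by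
    intro i; simp only [payoff, ← hS]; ring
  -- nonneg payoff for members
  have hmem : ∀ i : Fin N, i ≤ kstar → 0 ≤ payoff h V d x F (Finset.Iic kstar) i := by
    intro i hi
    have hik : h kstar ≤ h i := by
      rcases eq_or_lt_of_le hi with rfl | hlt
      · exact le_rfl
      · exact (hdesc i kstar hlt).le
    have := hkmem
    rw [hpay] at this ⊢
    have : h kstar * (V - x * d) / S ≤ h i * (V - x * d) / S := by gcongr
    rw [hpay] at hkmem
    linarith
  -- strict positivity for i < kstar
  have hstrict : ∀ i : Fin N, i < kstar → 0 < payoff h V d x F (Finset.Iic kstar) i := by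
    intro i hi
    have hik : h kstar < h i := hdesc i kstar hi
    rw [hpay] at hkmem ⊢
    have : h kstar * (V - x * d) / S < h i * (V - x * d) / S := by gcongr
    linarith
  -- joining payoff for i > kstar
  have hjoin : ∀ i : Fin N, kstar < i →
      payoff h V d x F (insert i (Finset.Iic kstar)) i < 0 := by
    intro i hi
    have hk'N : (kstar : ℕ) + 1 < N := lt_of_le_of_lt (Nat.succ_le_of_lt hi) i.isLt
    set k' : Fin N := ⟨(kstar : ℕ) + 1, hk'N⟩ with hk'
    have hkk' : kstar < k' := by simp [hk', Fin.lt_def]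
    have hk'i : k' ≤ i := by simpa [hk', Fin.le_def] using hi
    have hIic : Finset.Iic k' = insert k' (Finset.Iic kstar) := by
      ext m
      simp only [Finset.mem_Iic, Finset.mem_insert, Fin.le_def, Fin.ext_iff, hk']
      omega
    have hk'notin : k' ∉ Finset.Iic kstar := by
      simp [Finset.mem_Iic, not_le, hkk']
    have hinotin : i ∉ Finset.Iic kstar := by
      simp [Finset.mem_Iic, not_le, hi]
    have hsum1 : ∑ j ∈ insert i (Finset.Iic kstar), h j = h i + S := by
      rw [Finset.sum_insert hinotin, hS]
    have hsum2 : ∑ j ∈ Finset.Iic k', h j = h k' + S := by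
      rw [hIic, Finset.sum_insert hk'notin, hS]
    have hneg : payoff h V d x F (Finset.Iic k') k' < 0 := by
      by_contra hcon
      push_neg at hcon
      exact absurd (hkmax k' hcon) (not_le.2 hkk')
    have hpay2 : payoff h V d x F (Finset.Iic k') k' = h k' * (V - x * d) / (h k' + S) - F := by
      simp only [payoff, hsum2]; ring
    have hpay1 : payoff h V d x F (insert i (Finset.Iic kstar)) i
        = h i * (V - x * d) / (h i + S) - F := by
      simp only [payoff, hsum1]; ring
    have hhi : h i ≤ h k' := by
      rcases eq_or_lt_of_le hk'i with heq | hlt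
      · rw [heq]
      · exact (hdesc k' i hlt).le
    have hipos := hpos i
    have hk'pos := hpos k'
    have hmono : h i * (V - x * d) / (h i + S) ≤ h k' * (V - x * d) / (h k' + S) := by
      rw [div_le_div_iff₀ (by linarith) (by linarith)]
      nlinarith [mul_nonneg (mul_nonneg hc.le hSpos.le) (sub_nonneg.2 hhi)]
    rw [hpay1]
    rw [hpay2] at hneg
    linarith
  refine ⟨⟨fun i hi => hmem i (Finset.mem_Iic.1 hi), fun j hj => ?_⟩, hstrict, hjoin⟩
  have : kstar < j := not_le.1 (fun hle => hj (Finset.mem_Iic.2 hle))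
  exact (hjoin j this).le
end

section
/- Let h_i, h_K, h_L, d_k, d_l, V_k, V_l, x be positive reals, Δ and R reals, and P ∈ [0,1]. Define s = (h_i/(h_i+h_K))·(V_k − d_k·x), U0 = V_l + Δ + s + R, α = (h_i/d_k)/((h_i/d_k)+(h_L/d_l)), β = (h_L/d_l)/((h_i/d_k)+(h_L/d_l)), and B = (1−P)·U0 + P·(α·(V_l + Δ + V_k + R) + β·(Δ + s + R)). Then U0 − B = (P/((h_i/d_k)+(h_L/d_l)))·( V_l·h_L/d_l − (h_i/d_k)·(V_k·h_K + x·d_k·h_i)/(h_i+h_K) ); in particular, if V_l·h_L/d_l − (h_i/d_k)·(V_k·h_K + x·d_k·h_i)/(h_i+h_K) ≥ 0 then U0 ≥ B. -/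
/-- key algebraic step in the proof that the public sharing strategy
profile is an equilibrium. `U0` is the payoff of publishing immediately; `B` is an
upper bound on the payoff of delaying publication. -/
theorem publish_immediately_bound
    (h_i h_K h_L d_k d_l V_k V_l x : ℝ) (Δ R : ℝ) (P : ℝ)
    (hhi : 0 < h_i) (hhK : 0 < h_K) (hhL : 0 < h_L)
    (hdk : 0 < d_k) (hdl : 0 < d_l) (hVk : 0 < V_k) (hVl : 0 < V_l) (hx : 0 < x)
    (hP0 : 0 ≤ P) (hP1 : P ≤ 1) :
    (V_l + Δ + (h_i / (h_i + h_K)) * (V_k - d_k * x) + R) -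
      ((1 - P) * (V_l + Δ + (h_i / (h_i + h_K)) * (V_k - d_k * x) + R) +
        P * ((h_i / d_k / (h_i / d_k + h_L / d_l)) * (V_l + Δ + V_k + R) +
          (h_L / d_l / (h_i / d_k + h_L / d_l)) *
            (Δ + (h_i / (h_i + h_K)) * (V_k - d_k * x) + R))) =
      (P / (h_i / d_k + h_L / d_l)) *
        (V_l * h_L / d_l - (h_i / d_k) * ((V_k * h_K + x * d_k * h_i) / (h_i + h_K))) ∧
    (0 ≤ V_l * h_L / d_l - (h_i / d_k) * ((V_k * h_K + x * d_k * h_i) / (h_i + h_K)) →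
      (1 - P) * (V_l + Δ + (h_i / (h_i + h_K)) * (V_k - d_k * x) + R) +
        P * ((h_i / d_k / (h_i / d_k + h_L / d_l)) * (V_l + Δ + V_k + R) +
          (h_L / d_l / (h_i / d_k + h_L / d_l)) *
            (Δ + (h_i / (h_i + h_K)) * (V_k - d_k * x) + R)) ≤
      V_l + Δ + (h_i / (h_i + h_K)) * (V_k - d_k * x) + R) := by
  have hsum : 0 < h_i / d_k + h_L / d_l := by positivity
  have hik : 0 < h_i + h_K := by linarith
  have heq : (V_l + Δ + (h_i / (h_i + h_K)) * (V_k - d_k * x) + R) -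
      ((1 - P) * (V_l + Δ + (h_i / (h_i + h_K)) * (V_k - d_k * x) + R) +
        P * ((h_i / d_k / (h_i / d_k + h_L / d_l)) * (V_l + Δ + V_k + R) +
          (h_L / d_l / (h_i / d_k + h_L / d_l)) *
            (Δ + (h_i / (h_i + h_K)) * (V_k - d_k * x) + R))) =
      (P / (h_i / d_k + h_L / d_l)) *
        (V_l * h_L / d_l - (h_i / d_k) * ((V_k * h_K + x * d_k * h_i) / (h_i + h_K))) := by
    field_simp
    ring
  refine ⟨heq, fun hge => ?_⟩
  nlinarith [mul_nonneg (div_nonneg hP0 hsum.le) hge]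
end

section
/- The socially optimal participating group is unique and consists of top-capital scientists: letting i^e = max{ i : W(i) − W(i−1) ≥ 0 } (with W(0) = 0), the group I^e = {1,...,i^e} satisfies W(I') ≤ W(I^e) for every subset I' ⊆ {1,...,N}. -/
open Finset

/-- Expected social welfare when the participating set is `I`:
`W(I) = (V̂/r)·h_I/(h_I + d·r) − x̂·d·h_I/(h_I + d·r) − |I|·F̂`. -/
noncomputable def welfare {N : ℕ} (h : Fin N → ℝ) (Vhat r xhat d Fhat : ℝ)
    (I : Finset (Fin N)) : ℝ :=
  (Vhat / r) * (∑ j ∈ I, h j) / ((∑ j ∈ I, h j) + d * r)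
    - xhat * d * (∑ j ∈ I, h j) / ((∑ j ∈ I, h j) + d * r) - I.card * Fhat

/-- The group `{1,…,i}` of the `i` scientists with the largest capital (0-indexed:
indices `< i`). -/
def topGroup (N : ℕ) (i : ℕ) : Finset (Fin N) :=
  Finset.univ.filter (fun j : Fin N => (j : ℕ) < i)

lemma topGroup_zero (N : ℕ) : topGroup N 0 = ∅ := by
  ext j; simp [topGroup]

lemma topGroup_succ (N k : ℕ) (hk : k < N) :
    topGroup N (k + 1) = insert ⟨k, hk⟩ (topGroup N k) := by
  ext j
  simp only [topGroup, mem_filter, mem_univ, true_and, mem_insert, Fin.ext_iff]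
  omega

lemma mk_notMem_topGroup (N k : ℕ) (hk : k < N) :
    (⟨k, hk⟩ : Fin N) ∉ topGroup N k := by
  simp [topGroup]

lemma card_topGroup (N : ℕ) : ∀ k, k ≤ N → (topGroup N k).card = k := by
  intro k
  induction k with
  | zero => intro _; simp [topGroup_zero]
  | succ k ih =>
    intro hk
    rw [topGroup_succ N k (by omega),
      Finset.card_insert_of_notMem (mk_notMem_topGroup N k (by omega)),
      ih (by omega)]

lemma sum_castLE {N : ℕ} (h : Fin N → ℝ) : ∀ k (hk : k ≤ N),
    (∑ m : Fin k, h (Fin.castLE hk m)) = ∑ j ∈ topGroup N k, h j := by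
  intro k
  induction k with
  | zero => intro hk; simp [topGroup_zero]
  | succ k ih =>
    intro hk
    rw [Fin.sum_univ_castSucc, topGroup_succ N k (by omega),
      Finset.sum_insert (mk_notMem_topGroup N k (by omega)), ← ih (by omega),
      add_comm]
    rfl

/-- Proposition 5: the socially optimal participating group is unique
and equals `I^e = {1,…,i^e}` where `i^e = max{ i : W(i) − W(i−1) ≥ 0 }` (with
`W(0) = 0`): every subset `I'` has `W(I') ≤ W(I^e)`. -/
theorem socially_optimal_group (N : ℕ) (h : Fin N → ℝ)
    (hpos : ∀ i, 0 < h i) (hdesc : ∀ i j : Fin N, i < j → h j < h i)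
    (Vhat r xhat d Fhat : ℝ)
    (hVhat : 0 < Vhat) (hr : 0 < r) (hxhat : 0 < xhat) (hd : 0 < d) (hFhat : 0 < Fhat)
    (hworth : 0 < Vhat / r - xhat * d)
    (ie : ℕ) (hie1 : 1 ≤ ie) (hieN : ie ≤ N)
    (hmem : 0 ≤ welfare h Vhat r xhat d Fhat (topGroup N ie)
      - welfare h Vhat r xhat d Fhat (topGroup N (ie - 1)))
    (hmax : ∀ i : ℕ, 1 ≤ i → i ≤ N →
      0 ≤ welfare h Vhat r xhat d Fhat (topGroup N i)
        - welfare h Vhat r xhat d Fhat (topGroup N (i - 1)) → i ≤ ie) :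
    ∀ I' : Finset (Fin N),
      welfare h Vhat r xhat d Fhat I' ≤ welfare h Vhat r xhat d Fhat (topGroup N ie) := by
  intro I'
  classical
  set c : ℝ := d * r with hc
  set A : ℝ := Vhat / r - xhat * d with hA
  have hcpos : 0 < c := by positivity
  have hApos : 0 < A := hworth
  set Hs : ℕ → ℝ := fun k => ∑ j ∈ topGroup N k, h j with hHs
  have hHsucc : ∀ k (hk : k < N), Hs (k + 1) = Hs k + h ⟨k, hk⟩ := by
    intro k hk
    simp only [hHs]
    rw [topGroup_succ N k hk, Finset.sum_insert (mk_notMem_topGroup N k hk)]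
    ring
  have hHnonneg : ∀ k, 0 ≤ Hs k := fun k =>
    Finset.sum_nonneg (fun j _ => (hpos j).le)
  have hHmono : ∀ k1 k2 : ℕ, k1 ≤ k2 → Hs k1 ≤ Hs k2 := by
    intro k1 k2 hk
    apply Finset.sum_le_sum_of_subset_of_nonneg
    · intro j hj
      simp only [topGroup, mem_filter, mem_univ, true_and] at hj ⊢
      omega
    · intro j _ _; exact (hpos j).le
  set f : ℕ → ℝ := fun k => welfare h Vhat r xhat d Fhat (topGroup N k) with hf
  have hwel : ∀ I : Finset (Fin N), welfare h Vhat r xhat d Fhat I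
      = A * (∑ j ∈ I, h j) / ((∑ j ∈ I, h j) + c) - I.card * Fhat := by
    intro I; simp only [welfare, hA, hc]; ring
  have hfk : ∀ k, k ≤ N → f k = A * Hs k / (Hs k + c) - k * Fhat := by
    intro k hk
    simp only [hf, hwel, hHs, card_topGroup N k hk]
  have hGmono : ∀ S T : ℝ, 0 ≤ S → S ≤ T → A * S / (S + c) ≤ A * T / (T + c) := by
    intro S T hS hST
    have hSc : 0 < S + c := by linarith
    have hTc : 0 < T + c := by linarith
    rw [div_le_div_iff₀ hSc hTc]
    nlinarith [mul_le_mul_of_nonneg_left hST (mul_pos hApos hcpos).le]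
  -- marginal welfare formula
  have hD : ∀ k (hk : k < N),
      f (k + 1) - f k
        = A * c * h ⟨k, hk⟩ / ((Hs k + c) * (Hs k + h ⟨k, hk⟩ + c)) - Fhat := by
    intro k hk
    rw [hfk (k + 1) (by omega), hfk k (by omega), hHsucc k hk]
    have h1 : Hs k + c ≠ 0 := by have := hHnonneg k; positivity
    have h2 : Hs k + h ⟨k, hk⟩ + c ≠ 0 := by
      have := hHnonneg k; have := hpos ⟨k, hk⟩; positivity
    push_cast
    field_simp
    ring
  have hanti : ∀ i j : Fin N, i ≤ j → h j ≤ h i := by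
    intro i j hij
    rcases lt_or_eq_of_le hij with hlt | heq
    · exact (hdesc i j hlt).le
    · rw [heq]
  -- marginals are nonnegative up to ie
  have hieN' : ie - 1 < N := by omega
  have hmem' : 0 ≤ f (ie - 1 + 1) - f (ie - 1) := by
    have hie' : ie - 1 + 1 = ie := by omega
    rw [hie']
    exact hmem
  have hDpos : ∀ k, k + 1 ≤ ie → 0 ≤ f (k + 1) - f k := by
    intro k hk1
    have hkN' : k < N := by omega
    rw [hD k hkN']
    rw [hD (ie - 1) hieN'] at hmem'
    have key : A * c * h ⟨ie - 1, hieN'⟩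
          / ((Hs (ie - 1) + c) * (Hs (ie - 1) + h ⟨ie - 1, hieN'⟩ + c))
        ≤ A * c * h ⟨k, hkN'⟩ / ((Hs k + c) * (Hs k + h ⟨k, hkN'⟩ + c)) := by
      have hden1 : 0 < (Hs k + c) * (Hs k + h ⟨k, hkN'⟩ + c) := by
        have := hHnonneg k; have := hpos ⟨k, hkN'⟩; positivity
      have hnum : 0 ≤ A * c * h ⟨ie - 1, hieN'⟩ := by
        have := hpos ⟨ie - 1, hieN'⟩; positivity
      have hnumle : A * c * h ⟨ie - 1, hieN'⟩ ≤ A * c * h ⟨k, hkN'⟩ := by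
        have : h ⟨ie - 1, hieN'⟩ ≤ h ⟨k, hkN'⟩ := by
          apply hanti
          rw [Fin.le_def]
          simp
          omega
        exact mul_le_mul_of_nonneg_left this (mul_pos hApos hcpos).le
      have hdenle : (Hs k + c) * (Hs k + h ⟨k, hkN'⟩ + c)
          ≤ (Hs (ie - 1) + c) * (Hs (ie - 1) + h ⟨ie - 1, hieN'⟩ + c) := by
        have e1 : Hs k + h ⟨k, hkN'⟩ = Hs (k + 1) := (hHsucc k hkN').symm
        have e2 : Hs (ie - 1) + h ⟨ie - 1, hieN'⟩ = Hs (ie - 1 + 1) := (hHsucc _ hieN').symm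
        rw [e1, e2]
        have m1 := hHmono k (ie - 1) (by omega)
        have m2 := hHmono (k + 1) (ie - 1 + 1) (by omega)
        have n1 := hHnonneg k
        have n2 := hHnonneg (k + 1)
        exact mul_le_mul (by linarith) (by linarith) (by linarith) (by linarith)
      have hnum2 : 0 ≤ A * c * h ⟨k, hkN'⟩ := by
        have := hpos ⟨k, hkN'⟩; positivity
      exact div_le_div₀ hnum2 hnumle hden1 hdenle
    linarith
  -- marginals are negative beyond ie
  have hDneg : ∀ k, ie ≤ k → k < N → f (k + 1) - f k < 0 := by
    intro k hk1 hk2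
    by_contra hcon
    push_neg at hcon
    have := hmax (k + 1) (by omega) (by omega) (by
      have e : k + 1 - 1 = k := by omega
      rw [e]
      exact hcon)
    omega
  -- f k ≤ f ie for all admissible k
  have up : ∀ m k, k + m = ie → f k ≤ f ie := by
    intro m
    induction m with
    | zero =>
      intro k hk
      have : k = ie := by omega
      rw [this]
    | succ m ih =>
      intro k hk
      have h1 : 0 ≤ f (k + 1) - f k := hDpos k (by omega)
      have h2 := ih (k + 1) (by omega)
      linarith
  have down : ∀ m k, k = ie + m → k ≤ N → f k ≤ f ie := by
    intro m
    induction m with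
    | zero =>
      intro k hk _
      rw [show k = ie from by omega]
    | succ m ih =>
      intro k hk hkN2
      have h1 : f (ie + m + 1) - f (ie + m) < 0 := hDneg (ie + m) (by omega) (by omega)
      have h2 := ih (ie + m) rfl (by omega)
      rw [show k = ie + m + 1 from by omega]
      linarith
  have hfle : ∀ k, k ≤ N → f k ≤ f ie := by
    intro k hkN2
    rcases le_or_gt k ie with hk | hk
    · exact up (ie - k) k (by omega)
    · exact down (k - ie) k (by omega) hkN2
  -- step 1: welfare of any set is at most welfare of top set of same size
  set k := I'.card with hkdef
  have hkN : k ≤ N := by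
    have := Finset.card_le_univ I'
    simpa using this
  have hSle : (∑ j ∈ I', h j) ≤ Hs k := by
    let e := I'.orderIsoOfFin (rfl : I'.card = k)
    have hle : ∀ m : Fin k, (m : ℕ) ≤ ((e m : Fin N) : ℕ) := by
      have key : ∀ n : ℕ, ∀ m : Fin k, (m : ℕ) = n → n ≤ ((e m : Fin N) : ℕ) := by
        intro n
        induction n with
        | zero => intro m _; exact Nat.zero_le _
        | succ n ih =>
          intro m hm
          have hn : n < k := by omega
          have hlt : (⟨n, hn⟩ : Fin k) < m := by
            rw [Fin.lt_def]; simp; omega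
          have hmono := e.strictMono hlt
          have h2 : ((e ⟨n, hn⟩ : Fin N) : ℕ) < ((e m : Fin N) : ℕ) := by
            have h4 : ((e ⟨n, hn⟩ : {x // x ∈ I'}) : Fin N) < ((e m : {x // x ∈ I'}) : Fin N) :=
              hmono
            exact h4
          have h3 := ih ⟨n, hn⟩ rfl
          omega
      intro m; exact key (m : ℕ) m rfl
    have heq : (∑ j ∈ I', h j) = ∑ m : Fin k, h (e m) := by
      rw [← Finset.sum_attach I' (fun j => h j), ← Finset.univ_eq_attach]
      rw [← Equiv.sum_comp e.toEquiv (fun x : {x // x ∈ I'} => h (x : Fin N))]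
      rfl
    rw [heq]
    calc (∑ m : Fin k, h (e m))
        ≤ ∑ m : Fin k, h (Fin.castLE hkN m) := by
          apply Finset.sum_le_sum
          intro m _
          apply hanti
          rw [Fin.le_def]
          simpa using hle m
      _ = Hs k := sum_castLE h k hkN
  have hstep1 : welfare h Vhat r xhat d Fhat I' ≤ f k := by
    rw [hwel, hfk k hkN, ← hkdef]
    have hG := hGmono (∑ j ∈ I', h j) (Hs k)
      (Finset.sum_nonneg (fun j _ => (hpos j).le)) hSle
    linarith
  exact hstep1.trans (hfle k hkN)
end

section
/- With H_i = Σ_{j=1}^i h_j and H_0 = 0, for every i ≥ 1 the identity H_i/(H_i + d·r) − H_{i−1}/(H_{i−1} + d·r) = h_i·d·r / ((H_i + d·r)(H_{i−1} + d·r)) holds, and consequently the marginal welfare W(i) − W(i−1) is strictly decreasing in i when h_1 > h_2 > ... > h_N > 0 and V̂/r − x̂·d > 0. -/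
open Finset

/-- `H_i = Σ_{j=1}^i h_j` (0-indexed: sum of `h j` over indices `j < i`), with `H_0 = 0`. -/
noncomputable def capSum {N : ℕ} (h : Fin N → ℝ) (i : ℕ) : ℝ :=
  ∑ j ∈ Finset.univ.filter (fun j : Fin N => (j : ℕ) < i), h j

/-- `W(i) = (V̂/r)·H_i/(H_i + d·r) − x̂·d·H_i/(H_i + d·r) − i·F̂`, with `W(0) = 0`. -/
noncomputable def Wtop {N : ℕ} (h : Fin N → ℝ) (Vhat r xhat d Fhat : ℝ) (i : ℕ) : ℝ :=
  (Vhat / r) * capSum h i / (capSum h i + d * r)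
    - xhat * d * capSum h i / (capSum h i + d * r) - i * Fhat

lemma capSum_succ {N : ℕ} (h : Fin N → ℝ) (i : ℕ) (hiN : i < N) :
    capSum h (i + 1) = capSum h i + h ⟨i, hiN⟩ := by
  unfold capSum
  rw [add_comm (∑ j ∈ _, h j), ← Finset.sum_insert (by simp)]
  apply Finset.sum_congr _ (fun _ _ => rfl)
  ext j
  simp only [Finset.mem_filter, Finset.mem_insert, Finset.mem_univ, true_and, Fin.ext_iff]
  omega

lemma capSum_nonneg {N : ℕ} (h : Fin N → ℝ) (hpos : ∀ i, 0 < h i) (i : ℕ) :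
    0 ≤ capSum h i :=
  Finset.sum_nonneg fun j _ => (hpos j).le

lemma capSum_mono {N : ℕ} (h : Fin N → ℝ) (hpos : ∀ i, 0 < h i) {i j : ℕ} (hij : i ≤ j) :
    capSum h i ≤ capSum h j := by
  apply Finset.sum_le_sum_of_subset_of_nonneg
  · intro a ha
    simp only [Finset.mem_filter, Finset.mem_univ, true_and] at ha ⊢
    omega
  · exact fun a _ _ => (hpos a).le

lemma capSum_strict {N : ℕ} (h : Fin N → ℝ) (hpos : ∀ i, 0 < h i) {i j : ℕ}
    (hij : i < j) (hjN : j ≤ N) : capSum h i < capSum h j := by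
  have h1 : capSum h i < capSum h (i + 1) := by
    rw [capSum_succ h i (by omega)]
    linarith [hpos ⟨i, by omega⟩]
  exact lt_of_lt_of_le h1 (capSum_mono h hpos (by omega))

/-- the identity
`H_i/(H_i + d·r) − H_{i−1}/(H_{i−1} + d·r) = h_i·d·r/((H_i + d·r)(H_{i−1} + d·r))`
holds for every `1 ≤ i ≤ N`, and consequently the marginal welfare `W(i) − W(i−1)` is
strictly decreasing in `i`. -/
theorem marginal_welfare_decreasing (N : ℕ) (h : Fin N → ℝ)
    (hpos : ∀ i, 0 < h i) (hdesc : ∀ i j : Fin N, i < j → h j < h i)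
    (Vhat r xhat d Fhat : ℝ)
    (hVhat : 0 < Vhat) (hr : 0 < r) (hxhat : 0 < xhat) (hd : 0 < d) (hFhat : 0 < Fhat)
    (hworth : 0 < Vhat / r - xhat * d) :
    (∀ i : ℕ, ∀ hi1 : 1 ≤ i, ∀ hiN : i ≤ N,
      capSum h i / (capSum h i + d * r) - capSum h (i - 1) / (capSum h (i - 1) + d * r) =
        h ⟨i - 1, by omega⟩ * (d * r) /
          ((capSum h i + d * r) * (capSum h (i - 1) + d * r))) ∧
    (∀ i j : ℕ, 1 ≤ i → i < j → j ≤ N →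
      Wtop h Vhat r xhat d Fhat j - Wtop h Vhat r xhat d Fhat (j - 1) <
        Wtop h Vhat r xhat d Fhat i - Wtop h Vhat r xhat d Fhat (i - 1)) := by
  have hdr : 0 < d * r := mul_pos hd hr
  have Dpos : ∀ i : ℕ, 0 < capSum h i + d * r := fun i => by
    linarith [capSum_nonneg h hpos i]
  -- the identity
  have key : ∀ i : ℕ, ∀ hi1 : 1 ≤ i, ∀ hiN : i ≤ N,
      capSum h i / (capSum h i + d * r) - capSum h (i - 1) / (capSum h (i - 1) + d * r) =
        h ⟨i - 1, by omega⟩ * (d * r) /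
          ((capSum h i + d * r) * (capSum h (i - 1) + d * r)) := by
    intro i hi1 hiN
    have hsucc : capSum h i = capSum h (i - 1) + h ⟨i - 1, by omega⟩ := by
      conv_lhs => rw [show i = (i - 1) + 1 by omega]
      exact capSum_succ h (i - 1) (by omega)
    have D1 := Dpos i
    have D2 := Dpos (i - 1)
    field_simp
    rw [hsucc]
    ring
  refine ⟨key, ?_⟩
  intro i j hi1 hij hjN
  -- rewrite marginal welfare
  have marg : ∀ k : ℕ, ∀ _hk1 : 1 ≤ k, ∀ _hkN : k ≤ N,
      Wtop h Vhat r xhat d Fhat k - Wtop h Vhat r xhat d Fhat (k - 1) =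
        (Vhat / r - xhat * d) *
          (h ⟨k - 1, by omega⟩ * (d * r) /
            ((capSum h k + d * r) * (capSum h (k - 1) + d * r))) - Fhat := by
    intro k hk1 hkN
    have hcast : ((k - 1 : ℕ) : ℝ) = (k : ℝ) - 1 := by
      rw [Nat.cast_sub hk1]; norm_num
    have := key k hk1 hkN
    unfold Wtop
    rw [hcast]
    have D1 := (Dpos k).ne'
    have D2 := (Dpos (k - 1)).ne'
    calc (Vhat / r) * capSum h k / (capSum h k + d * r)
          - xhat * d * capSum h k / (capSum h k + d * r) - (k : ℝ) * Fhat
          - ((Vhat / r) * capSum h (k-1) / (capSum h (k-1) + d * r)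
            - xhat * d * capSum h (k-1) / (capSum h (k-1) + d * r) - ((k:ℝ) - 1) * Fhat)
        = (Vhat / r - xhat * d) *
            (capSum h k / (capSum h k + d * r) - capSum h (k-1) / (capSum h (k-1) + d * r))
          - Fhat := by field_simp; ring
      _ = _ := by rw [this]
  rw [marg i hi1 (by omega), marg j (by omega) hjN]
  have Di := Dpos i
  have Di1 := Dpos (i - 1)
  have Dj := Dpos j
  have Dj1 := Dpos (j - 1)
  have hnum : h ⟨j - 1, by omega⟩ < h ⟨i - 1, by omega⟩ :=
    hdesc _ _ (by simp [Fin.lt_def]; omega)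
  have hden : (capSum h i + d * r) * (capSum h (i - 1) + d * r) <
      (capSum h j + d * r) * (capSum h (j - 1) + d * r) := by
    have h1 : capSum h i ≤ capSum h j := capSum_mono h hpos (by omega)
    have h2 : capSum h (i - 1) < capSum h (j - 1) :=
      capSum_strict h hpos (by omega) (by omega)
    nlinarith
  have hfrac : h ⟨j - 1, by omega⟩ * (d * r) /
      ((capSum h j + d * r) * (capSum h (j - 1) + d * r)) <
      h ⟨i - 1, by omega⟩ * (d * r) /
      ((capSum h i + d * r) * (capSum h (i - 1) + d * r)) := by
    apply div_lt_div₀ (by nlinarith) hden.le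
      (mul_nonneg (hpos _).le hdr.le) (mul_pos Di Di1)
  nlinarith [hfrac]
end
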